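/- Let A be an associative unital ℂ-algebra with the elements and relations described. Then for all t, h, k, b, p ∈ ℕ: (v) if b > 0 and k > 0, then X_t^{±(b;p|k;h)} = (1/k)·Σ_{z=1}^{k} z·X_t^{±((z);h)}·X_t^{±(b−1;p|k−z;h)}; and (vi) if b > 0, then (b−p+k)·X_t^{±(b;p|k;h)} = X_t^{±}·X_t^{±(b−1;p|k;h)} + Σ_{z=1}^{k} (z+1)·X_t^{±((z);h)}·X_t^{±(b−1;p|k−z;h)} (for both choices of sign ±). -/

import Mathlib

open Finset

/-- `X_t^{±((p);h)}`: for `p > 0`, `Σ_{w=0}^{p} C(p,w)·(−Q)^w·X_{t+p·h+w}`; for `p = 0`, `1`. -/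
noncomputable def Xbr {A : Type*} [Ring A] [Algebra ℂ A] (Q : ℂ) (X : ℕ → A) (t p h : ℕ) : A :=
  if p = 0 then 1
  else ∑ w ∈ Finset.range (p + 1), ((p.choose w : ℂ) * (-Q) ^ w) • X (t + p * h + w)

/-- Divided power `X_t^{(b)} = (X_t)^b / b!` for `b ≥ 0`, and `0` for `b < 0`. -/
noncomputable def Xdiv {A : Type*} [Ring A] [Algebra ℂ A] (X : ℕ → A) (t : ℕ) (b : ℤ) : A :=
  if b < 0 then 0 else ((b.toNat.factorial : ℂ))⁻¹ • X t ^ b.toNat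

/-- `X_t^{(λ;h)} = Π_{j≥1} (X_t^{((j);h)})^{m_j(λ)} / m_j(λ)!` for a partition `λ` of `k`
(the factors pairwise commute under the relations, so the choice of ordering of the
product over the parts of `λ` is immaterial). -/
noncomputable def Xpart {A : Type*} [Ring A] [Algebra ℂ A] (Q : ℂ) (X : ℕ → A) (t h k : ℕ)
    (lam : Nat.Partition k) : A :=
  (∏ j ∈ Finset.range (k + 1), ((lam.parts.count j).factorial : ℂ))⁻¹ •
    ((lam.parts.sort (· ≤ ·)).map fun j => Xbr Q X t j h).prod

/-- `X_t^{(b;p|k;h)} = Σ_{λ ⊢ k} X_t^{(λ;h)} · X_t^{(b−p−ℓ(λ))}`. -/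
noncomputable def Xbpkh {A : Type*} [Ring A] [Algebra ℂ A] (Q : ℂ) (X : ℕ → A)
    (t b p k h : ℕ) : A :=
  ∑ lam : Nat.Partition k,
    Xpart Q X t h k lam * Xdiv X t ((b : ℤ) - (p : ℤ) - (Multiset.card lam.parts : ℤ))


section Comm
variable {A : Type*} [Ring A] [Algebra ℂ A] (Q : ℂ) (X : ℕ → A)

lemma comm_right_Xbr (a : A) (ha : ∀ n, Commute a (X n)) (t p h : ℕ) :
    Commute a (Xbr Q X t p h) := by
  unfold Xbr
  split
  · exact Commute.one_right a
  · exact Commute.sum_right _ _ _ fun w _ => (ha _).smul_right _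

lemma comm_X_Xbr (hc : ∀ s t, X t * X s = X s * X t) (s t p h : ℕ) :
    Commute (X s) (Xbr Q X t p h) :=
  comm_right_Xbr Q X _ (fun n => hc n s) t p h

lemma comm_Xbr_Xbr (hc : ∀ s t, X t * X s = X s * X t) (t p h q h' : ℕ) :
    Commute (Xbr Q X t p h) (Xbr Q X t q h') :=
  comm_right_Xbr Q X _ (fun n => (comm_X_Xbr Q X hc n t p h).symm) t q h'

lemma sorted_prod_cons (z : ℕ) (s : Multiset ℕ) (f : ℕ → A)
    (hf : ∀ a b, Commute (f a) (f b)) :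
    (((z ::ₘ s).sort (· ≤ ·)).map f).prod = f z * ((s.sort (· ≤ ·)).map f).prod := by
  have hperm : ((z ::ₘ s).sort (· ≤ ·)).Perm (z :: s.sort (· ≤ ·)) := by
    rw [← Multiset.coe_eq_coe, Multiset.sort_eq, ← Multiset.cons_coe, Multiset.sort_eq]
  have hpw : (((z ::ₘ s).sort (· ≤ ·)).map f).Pairwise Commute := by
    rw [List.pairwise_map]
    exact List.pairwise_of_forall_mem_list fun a _ b _ => hf a b
  rw [List.Perm.prod_eq' (hperm.map f) hpw, List.map_cons, List.prod_cons]

lemma comm_right_sorted_prod (a : A) (t h : ℕ) (ha : ∀ n, Commute a (X n)) (s : Multiset ℕ) :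
    Commute a ((s.sort (· ≤ ·)).map fun j => Xbr Q X t j h).prod := by
  apply Commute.list_prod_right
  intro x hx
  simp only [List.mem_map] at hx
  obtain ⟨j, _, rfl⟩ := hx
  exact comm_right_Xbr Q X a ha t j h

end Comm

lemma mem_le_sum {s : Multiset ℕ} {a : ℕ} (h : a ∈ s) : a ≤ s.sum := by
  obtain ⟨u, rfl⟩ := Multiset.exists_cons_of_mem h
  rw [Multiset.sum_cons]; exact Nat.le_add_right _ _

lemma countfact (k z : ℕ) (hz : 0 < z) (hzk : z ≤ k) (μ : (k - z).Partition) :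
    ∏ j ∈ Finset.range (k + 1), ((z ::ₘ μ.parts).count j).factorial
      = (μ.parts.count z + 1) * ∏ j ∈ Finset.range (k - z + 1), (μ.parts.count j).factorial := by
  have hmem : z ∈ Finset.range (k + 1) := Finset.mem_range.mpr (by omega)
  have hext : ∏ j ∈ Finset.range (k - z + 1), (μ.parts.count j).factorial
      = ∏ j ∈ Finset.range (k + 1), (μ.parts.count j).factorial := by
    apply Finset.prod_subset (Finset.range_subset_range.mpr (by omega))
    intro x hx hnx
    have hc0 : μ.parts.count x = 0 := by
      rw [Multiset.count_eq_zero]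
      intro hxm
      have hle := mem_le_sum hxm
      rw [μ.parts_sum] at hle
      rw [Finset.mem_range] at hx
      rw [Finset.mem_range] at hnx
      omega
    simp [hc0]
  rw [hext, ← Finset.mul_prod_erase _ _ hmem, ← Finset.mul_prod_erase _ _ hmem]
  have he : ∀ j ∈ (Finset.range (k + 1)).erase z,
      ((z ::ₘ μ.parts).count j).factorial = (μ.parts.count j).factorial := fun j hj => by
    rw [Multiset.count_cons_of_ne (Finset.ne_of_mem_erase hj)]
  rw [Finset.prod_congr rfl he, Multiset.count_cons_self, Nat.factorial_succ]
  ring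

def insPart (k z : ℕ) (μ : (k - z).Partition) : Nat.Partition k :=
  if h : 0 < z ∧ z ≤ k then
    ⟨z ::ₘ μ.parts, by
      intro i hi
      rcases Multiset.mem_cons.mp hi with h' | h'
      · exact h' ▸ h.1
      · exact μ.parts_pos h', by
      rw [Multiset.sum_cons, μ.parts_sum, Nat.add_sub_cancel' h.2]⟩
  else ⟨Multiset.replicate k 1, by
      intro i hi; simp [Multiset.eq_of_mem_replicate hi], by simp⟩

lemma insPart_parts {k z : ℕ} (h1 : 0 < z) (h2 : z ≤ k) (μ : (k - z).Partition) :
    (insPart k z μ).parts = z ::ₘ μ.parts := by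
  rw [insPart, dif_pos ⟨h1, h2⟩]

section Main
variable {A : Type*} [Ring A] [Algebra ℂ A] (Q : ℂ) (X : ℕ → A)

lemma prodfact_ne_zero (s : Finset ℕ) (g : ℕ → ℕ) :
    ((∏ j ∈ s, (g j).factorial : ℕ) : ℂ) ≠ 0 :=
  Nat.cast_ne_zero.mpr (Finset.prod_ne_zero_iff.mpr fun j _ => (Nat.factorial_pos _).ne')

lemma Xbr_mul_Xpart (hc : ∀ s t, X t * X s = X s * X t) (t h : ℕ) {k z : ℕ}
    (hz : 0 < z) (hzk : z ≤ k) (μ : (k - z).Partition) :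
    Xbr Q X t z h * Xpart Q X t h (k - z) μ
      = ((μ.parts.count z + 1 : ℕ) : ℂ) • Xpart Q X t h k (insPart k z μ) := by
  rw [Xpart, Xpart, insPart_parts hz hzk μ,
    sorted_prod_cons z μ.parts _ (fun a b => comm_Xbr_Xbr Q X hc t a h b h),
    mul_smul_comm, smul_smul]
  congr 1
  rw [← Nat.cast_prod, ← Nat.cast_prod, countfact k z hz hzk μ]
  push_cast
  rw [mul_inv, ← mul_assoc, mul_inv_cancel₀ (Nat.cast_add_one_ne_zero (μ.parts.count z)), one_mul]

lemma X_mul_Xdiv (t : ℕ) (m : ℤ) :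
    X t * Xdiv X t m = ((m + 1 : ℤ) : ℂ) • Xdiv X t (m + 1) := by
  unfold Xdiv
  rcases lt_trichotomy m (-1) with h | h | h
  · rw [if_pos (by omega), if_pos (by omega), mul_zero, smul_zero]
  · subst h
    rw [if_pos (by omega)]
    norm_num
  · have h0 : ¬ m < 0 := by omega
    have h1 : ¬ m + 1 < 0 := by omega
    rw [if_neg h0, if_neg h1]
    have hm : (m + 1).toNat = m.toNat + 1 := by omega
    rw [hm, mul_smul_comm, ← pow_succ', smul_smul]
    congr 1
    rw [Nat.factorial_succ]
    have hf : ((m.toNat.factorial : ℂ)) ≠ 0 := Nat.cast_ne_zero.mpr (Nat.factorial_pos _).ne'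
    have hm1 : ((m.toNat + 1 : ℕ) : ℂ) ≠ 0 := Nat.cast_ne_zero.mpr (by omega)
    push_cast
    rw [mul_inv]
    rw [← mul_assoc]
    have : ((m : ℂ) + 1) = ((m.toNat : ℂ) + 1) := by
      congr 1
      exact_mod_cast congrArg (Int.cast : ℤ → ℂ) (by omega : m = (m.toNat : ℤ))
    rw [this, mul_inv_cancel₀ (by push_cast at hm1 ⊢; exact hm1), one_mul]

end Main

def erasePart (k z : ℕ) (lam : Nat.Partition k) : (k - z).Partition :=
  if h : z ∈ lam.parts then
    ⟨lam.parts.erase z, by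
      intro i hi; exact lam.parts_pos (Multiset.mem_of_mem_erase hi), by
      have h2 : (z ::ₘ lam.parts.erase z).sum = lam.parts.sum := by
        rw [Multiset.cons_erase h]
      rw [Multiset.sum_cons, lam.parts_sum] at h2
      omega⟩
  else ⟨Multiset.replicate (k - z) 1, by
      intro i hi; simp [Multiset.eq_of_mem_replicate hi], by simp⟩

lemma erasePart_parts {k z : ℕ} {lam : Nat.Partition k} (h : z ∈ lam.parts) :
    (erasePart k z lam).parts = lam.parts.erase z := by
  rw [erasePart, dif_pos h]

lemma reindex {M : Type*} [AddCommMonoid M] (k : ℕ) (f : Nat.Partition k → ℕ → M) :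
    ∑ z ∈ Finset.range k, ∑ μ : (k - (z + 1)).Partition, f (insPart k (z + 1) μ) (z + 1)
      = ∑ lam : Nat.Partition k, ∑ z ∈ lam.parts.toFinset, f lam z := by
  have hstep : ∀ z ∈ Finset.range k,
      ∑ μ : (k - (z + 1)).Partition, f (insPart k (z + 1) μ) (z + 1)
        = ∑ lam ∈ Finset.univ.filter (fun lam : Nat.Partition k => (z + 1) ∈ lam.parts),
            f lam (z + 1) := by
    intro z hz
    rw [Finset.mem_range] at hz
    refine Finset.sum_nbij' (fun μ => insPart k (z + 1) μ) (fun lam => erasePart k (z + 1) lam)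
      ?_ ?_ ?_ ?_ ?_
    · intro μ _
      simp only [Finset.mem_filter, Finset.mem_univ, true_and]
      rw [insPart_parts (Nat.succ_pos z) hz μ]
      exact Multiset.mem_cons_self _ _
    · intro lam _; exact Finset.mem_univ _
    · intro μ _
      apply Nat.Partition.ext
      rw [erasePart_parts (by rw [insPart_parts (Nat.succ_pos z) hz μ]; exact Multiset.mem_cons_self _ _),
        insPart_parts (Nat.succ_pos z) hz μ, Multiset.erase_cons_head]
    · intro lam hlam
      simp only [Finset.mem_filter, Finset.mem_univ, true_and] at hlam
      apply Nat.Partition.ext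
      rw [insPart_parts (Nat.succ_pos z) hz, erasePart_parts hlam, Multiset.cons_erase hlam]
    · intro μ _; rfl
  rw [Finset.sum_congr rfl hstep]
  simp_rw [Finset.sum_filter]
  rw [Finset.sum_comm]
  refine Finset.sum_congr rfl fun lam _ => ?_
  rw [← Finset.sum_filter]
  have hk : ∀ z ∈ lam.parts, 0 < z ∧ z ≤ k := fun z hz =>
    ⟨lam.parts_pos hz, lam.parts_sum ▸ mem_le_sum hz⟩
  refine Finset.sum_nbij' (fun w => w + 1) (fun z => z - 1) ?_ ?_ ?_ ?_ ?_
  · intro w hw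
    simp only [Finset.mem_filter] at hw
    exact Multiset.mem_toFinset.mpr hw.2
  · intro z hz
    rw [Multiset.mem_toFinset] at hz
    obtain ⟨h1, h2⟩ := hk z hz
    simp only [Finset.mem_filter, Finset.mem_range]
    refine ⟨by omega, ?_⟩
    have h3 : z - 1 + 1 = z := by omega
    rw [h3]; exact hz
  · intro w _; simp
  · intro z hz
    rw [Multiset.mem_toFinset] at hz
    have := (hk z hz).1
    omega
  · intro w hw
    simp only [Finset.mem_filter] at hw
    rfl

lemma sum_count_mul (s : Multiset ℕ) : ∑ a ∈ s.toFinset, a * s.count a = s.sum := by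
  conv_rhs => rw [← Multiset.map_id s]
  rw [Finset.sum_multiset_map_count]
  simp [smul_eq_mul, mul_comm]

section Big
variable {A : Type*} [Ring A] [Algebra ℂ A] (Q : ℂ) (X : ℕ → A)

lemma lemA (hc : ∀ s t, X t * X s = X s * X t) (t h p : ℕ) {k b : ℕ} (hb : b ≠ 0) :
    ∑ z ∈ Finset.range k,
        ((z : ℂ) + 1) • (Xbr Q X t (z + 1) h * Xbpkh Q X t (b - 1) p (k - (z + 1)) h)
      = (k : ℂ) • Xbpkh Q X t b p k h := by
  have hkey : ∀ z ∈ Finset.range k,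
      ((z : ℂ) + 1) • (Xbr Q X t (z + 1) h * Xbpkh Q X t (b - 1) p (k - (z + 1)) h)
        = ∑ μ : (k - (z + 1)).Partition,
            (fun (lam : Nat.Partition k) (w : ℕ) =>
              ((w : ℂ) * (lam.parts.count w : ℂ)) •
                (Xpart Q X t h k lam *
                  Xdiv X t ((b : ℤ) - (p : ℤ) - (Multiset.card lam.parts : ℤ))))
            (insPart k (z + 1) μ) (z + 1) := by
    intro z hz
    rw [Finset.mem_range] at hz
    rw [Xbpkh, Finset.mul_sum, Finset.smul_sum]
    refine Finset.sum_congr rfl fun μ _ => ?_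
    have hins := insPart_parts (Nat.succ_pos z) hz μ
    rw [← mul_assoc, Xbr_mul_Xpart Q X hc t h (Nat.succ_pos z) hz μ,
      smul_mul_assoc, smul_smul]
    simp only []
    have harg : ((b - 1 : ℕ) : ℤ) - (p : ℤ) - (Multiset.card μ.parts : ℤ)
        = (b : ℤ) - (p : ℤ) - (Multiset.card (insPart k (z + 1) μ).parts : ℤ) := by
      rw [hins, Multiset.card_cons]
      have h1 : 1 ≤ b := Nat.one_le_iff_ne_zero.mpr hb
      push_cast [h1]
      ring
    rw [harg]
    congr 1
    rw [hins, Multiset.count_cons_self]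
    push_cast
    ring
  rw [Finset.sum_congr rfl hkey,
    reindex k (fun (lam : Nat.Partition k) (w : ℕ) =>
      ((w : ℂ) * (lam.parts.count w : ℂ)) •
        (Xpart Q X t h k lam *
          Xdiv X t ((b : ℤ) - (p : ℤ) - (Multiset.card lam.parts : ℤ)))),
    Xbpkh, Finset.smul_sum]
  refine Finset.sum_congr rfl fun lam _ => ?_
  rw [← Finset.sum_smul]
  congr 1
  have h1 : ∑ w ∈ lam.parts.toFinset, (w : ℂ) * (lam.parts.count w : ℂ)
      = ((∑ w ∈ lam.parts.toFinset, w * lam.parts.count w : ℕ) : ℂ) := by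
    push_cast; rfl
  rw [h1, sum_count_mul, lam.parts_sum]

lemma lemB (hc : ∀ s t, X t * X s = X s * X t) (t h p : ℕ) {k b : ℕ} (hb : b ≠ 0) :
    ∑ z ∈ Finset.range k, Xbr Q X t (z + 1) h * Xbpkh Q X t (b - 1) p (k - (z + 1)) h
      = ∑ lam : Nat.Partition k,
          ((Multiset.card lam.parts : ℂ)) •
            (Xpart Q X t h k lam *
              Xdiv X t ((b : ℤ) - (p : ℤ) - (Multiset.card lam.parts : ℤ))) := by
  have hkey : ∀ z ∈ Finset.range k,
      Xbr Q X t (z + 1) h * Xbpkh Q X t (b - 1) p (k - (z + 1)) h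
        = ∑ μ : (k - (z + 1)).Partition,
            (fun (lam : Nat.Partition k) (w : ℕ) =>
              ((lam.parts.count w : ℂ)) •
                (Xpart Q X t h k lam *
                  Xdiv X t ((b : ℤ) - (p : ℤ) - (Multiset.card lam.parts : ℤ))))
            (insPart k (z + 1) μ) (z + 1) := by
    intro z hz
    rw [Finset.mem_range] at hz
    rw [Xbpkh, Finset.mul_sum]
    refine Finset.sum_congr rfl fun μ _ => ?_
    have hins := insPart_parts (Nat.succ_pos z) hz μ
    rw [← mul_assoc, Xbr_mul_Xpart Q X hc t h (Nat.succ_pos z) hz μ, smul_mul_assoc]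
    simp only []
    have harg : ((b - 1 : ℕ) : ℤ) - (p : ℤ) - (Multiset.card μ.parts : ℤ)
        = (b : ℤ) - (p : ℤ) - (Multiset.card (insPart k (z + 1) μ).parts : ℤ) := by
      rw [hins, Multiset.card_cons]
      have h1 : 1 ≤ b := Nat.one_le_iff_ne_zero.mpr hb
      push_cast [h1]
      ring
    rw [harg]
    congr 1
    rw [hins, Multiset.count_cons_self]
  rw [Finset.sum_congr rfl hkey,
    reindex k (fun (lam : Nat.Partition k) (w : ℕ) =>
      ((lam.parts.count w : ℂ)) •
        (Xpart Q X t h k lam *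
          Xdiv X t ((b : ℤ) - (p : ℤ) - (Multiset.card lam.parts : ℤ))))]
  refine Finset.sum_congr rfl fun lam _ => ?_
  rw [← Finset.sum_smul]
  congr 1
  have h1 : ∑ w ∈ lam.parts.toFinset, (lam.parts.count w : ℂ)
      = ((∑ w ∈ lam.parts.toFinset, lam.parts.count w : ℕ) : ℂ) := by
    push_cast; rfl
  rw [h1, Multiset.toFinset_sum_count_eq]

lemma lemC (hc : ∀ s t, X t * X s = X s * X t) (t h p : ℕ) {k b : ℕ} (hb : b ≠ 0) :
    X t * Xbpkh Q X t (b - 1) p k h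
      = ∑ lam : Nat.Partition k,
          ((b : ℂ) - (p : ℂ) - (Multiset.card lam.parts : ℂ)) •
            (Xpart Q X t h k lam *
              Xdiv X t ((b : ℤ) - (p : ℤ) - (Multiset.card lam.parts : ℤ))) := by
  rw [Xbpkh, Finset.mul_sum]
  refine Finset.sum_congr rfl fun lam _ => ?_
  have hcomm : Commute (X t) (Xpart Q X t h k lam) := by
    rw [Xpart]
    exact (comm_right_sorted_prod Q X (X t) t h (fun n => hc n t) lam.parts).smul_right _
  rw [← mul_assoc, hcomm.eq, mul_assoc, X_mul_Xdiv X t _]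
  have harg : ((b - 1 : ℕ) : ℤ) - (p : ℤ) - (Multiset.card lam.parts : ℤ) + 1
      = (b : ℤ) - (p : ℤ) - (Multiset.card lam.parts : ℤ) := by
    have h1 : 1 ≤ b := Nat.one_le_iff_ne_zero.mpr hb
    push_cast [h1]
    ring
  rw [harg, mul_smul_comm]
  congr 1
  push_cast
  ring

end Big

section Final
variable {A : Type*} [Ring A] [Algebra ℂ A] (Q : ℂ) (X : ℕ → A)

lemma stmt_v (hc : ∀ s t, X t * X s = X s * X t) (t h k b p : ℕ) (hb : b ≠ 0) (hk : k ≠ 0) :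
    Xbpkh Q X t b p k h =
      (k : ℂ)⁻¹ • ∑ z ∈ Finset.range k,
        ((z : ℂ) + 1) • (Xbr Q X t (z + 1) h * Xbpkh Q X t (b - 1) p (k - (z + 1)) h) := by
  rw [lemA Q X hc t h p hb, smul_smul, inv_mul_cancel₀ (Nat.cast_ne_zero.mpr hk), one_smul]

lemma stmt_vi (hc : ∀ s t, X t * X s = X s * X t) (t h k b p : ℕ) (hb : b ≠ 0) :
    ((b : ℂ) - (p : ℂ) + (k : ℂ)) • Xbpkh Q X t b p k h =
      X t * Xbpkh Q X t (b - 1) p k h +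
        ∑ z ∈ Finset.range k,
          ((z : ℂ) + 2) • (Xbr Q X t (z + 1) h * Xbpkh Q X t (b - 1) p (k - (z + 1)) h) := by
  have hsplit : ∀ z ∈ Finset.range k,
      ((z : ℂ) + 2) • (Xbr Q X t (z + 1) h * Xbpkh Q X t (b - 1) p (k - (z + 1)) h)
        = ((z : ℂ) + 1) • (Xbr Q X t (z + 1) h * Xbpkh Q X t (b - 1) p (k - (z + 1)) h)
          + Xbr Q X t (z + 1) h * Xbpkh Q X t (b - 1) p (k - (z + 1)) h := fun z _ => by
    rw [show ((z : ℂ) + 2) = ((z : ℂ) + 1) + 1 by ring, add_smul, one_smul]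
  rw [Finset.sum_congr rfl hsplit, Finset.sum_add_distrib, lemA Q X hc t h p hb,
    lemB Q X hc t h p hb, lemC Q X hc t h p hb]
  have hCL : (∑ lam : Nat.Partition k,
        ((b : ℂ) - (p : ℂ) - (Multiset.card lam.parts : ℂ)) •
          (Xpart Q X t h k lam *
            Xdiv X t ((b : ℤ) - (p : ℤ) - (Multiset.card lam.parts : ℤ))))
      + (∑ lam : Nat.Partition k,
          ((Multiset.card lam.parts : ℂ)) •
            (Xpart Q X t h k lam *
              Xdiv X t ((b : ℤ) - (p : ℤ) - (Multiset.card lam.parts : ℤ))))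
      = ((b : ℂ) - (p : ℂ)) • Xbpkh Q X t b p k h := by
    rw [← Finset.sum_add_distrib, Xbpkh, Finset.smul_sum]
    refine Finset.sum_congr rfl fun lam _ => ?_
    rw [← add_smul, sub_add_cancel]
  rw [add_left_comm, hCL,
    show (b : ℂ) - (p : ℂ) + (k : ℂ) = (k : ℂ) + ((b : ℂ) - (p : ℂ)) by ring, add_smul]

end Final

theorem stmt4 {A : Type*} [Ring A] [Algebra ℂ A] (Q : ℂ) (Xp Xm J : ℕ → A)
    (hL1 : ∀ s t, J s * J t = J t * J s)
    (hL2p : ∀ s t, J s * Xp t - Xp t * J s = (2 : ℂ) • Xp (s + t))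
    (hL2m : ∀ s t, J s * Xm t - Xm t * J s = -((2 : ℂ) • Xm (s + t)))
    (hL3 : ∀ s t, Xp t * Xm s - Xm s * Xp t = J (s + t) - Q • J (s + t + 1))
    (hL4p : ∀ s t, Xp t * Xp s = Xp s * Xp t)
    (hL4m : ∀ s t, Xm t * Xm s = Xm s * Xm t)
    (t h k b p : ℕ) :
    (b ≠ 0 → k ≠ 0 →
      Xbpkh Q Xp t b p k h =
        (k : ℂ)⁻¹ • ∑ z ∈ Finset.range k,
          ((z : ℂ) + 1) • (Xbr Q Xp t (z + 1) h * Xbpkh Q Xp t (b - 1) p (k - (z + 1)) h)) ∧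
    (b ≠ 0 → k ≠ 0 →
      Xbpkh Q Xm t b p k h =
        (k : ℂ)⁻¹ • ∑ z ∈ Finset.range k,
          ((z : ℂ) + 1) • (Xbr Q Xm t (z + 1) h * Xbpkh Q Xm t (b - 1) p (k - (z + 1)) h)) ∧
    (b ≠ 0 →
      ((b : ℂ) - (p : ℂ) + (k : ℂ)) • Xbpkh Q Xp t b p k h =
        Xp t * Xbpkh Q Xp t (b - 1) p k h +
          ∑ z ∈ Finset.range k,
            ((z : ℂ) + 2) • (Xbr Q Xp t (z + 1) h * Xbpkh Q Xp t (b - 1) p (k - (z + 1)) h)) ∧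
    (b ≠ 0 →
      ((b : ℂ) - (p : ℂ) + (k : ℂ)) • Xbpkh Q Xm t b p k h =
        Xm t * Xbpkh Q Xm t (b - 1) p k h +
          ∑ z ∈ Finset.range k,
            ((z : ℂ) + 2) • (Xbr Q Xm t (z + 1) h * Xbpkh Q Xm t (b - 1) p (k - (z + 1)) h)) :=
  ⟨fun hb hk => stmt_v Q Xp hL4p t h k b p hb hk,
   fun hb hk => stmt_v Q Xm hL4m t h k b p hb hk,
   fun hb => stmt_vi Q Xp hL4p t h k b p hb,
   fun hb => stmt_vi Q Xm hL4m t h k b p hb⟩
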